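/- Let H and K be complex inner product spaces with dim(H) ≥ 2, and let T : H → K be a real-linear isometry preserving orthogonality. Then for each norm-one vector x₀ ∈ H there exist a unique scalar α(x₀) ∈ iℝ (i.e., a purely imaginary complex number) and a unique vector η(x₀) ∈ K such that: (1) ⟪η(x₀), T(x₀)⟫ = 0; (2) |α(x₀)|² + ‖η(x₀)‖² = ‖x₀‖² = 1; and (3) T(i x₀) = α(x₀) T(x₀) + η(x₀). In particular, the real part of ⟪T(i x₀), T(x₀)⟫ is zero. -/

import Mathlib

open scoped ComplexInnerProductSpace

/-- For a real-linear isometry `T` preserving orthogonality between complex inner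
product spaces with `dim H ≥ 2`, and every norm-one `x₀`, there are a unique purely
imaginary `α` and a unique `η ⊥ T x₀` with `|α|² + ‖η‖² = 1` and
`T(i x₀) = α • T x₀ + η`. In particular `re ⟪T(i x₀), T x₀⟫ = 0`. -/
theorem realLinearIsometry_op_decomposition
    {H K : Type*} [NormedAddCommGroup H] [InnerProductSpace ℂ H]
    [NormedAddCommGroup K] [InnerProductSpace ℂ K]
    (hdim : 2 ≤ Module.rank ℂ H)
    (T : H → K)
    (hadd : ∀ x y, T (x + y) = T x + T y)
    (hsmul : ∀ (r : ℝ) (x : H), T (r • x) = r • T x)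
    (hiso : ∀ x, ‖T x‖ = ‖x‖)
    (hop : ∀ x y : H, ⟪x, y⟫ = 0 → ⟪T x, T y⟫ = 0)
    (x₀ : H) (hx₀ : ‖x₀‖ = 1) :
    (∃! p : ℂ × K, p.1.re = 0 ∧ ⟪p.2, T x₀⟫ = 0 ∧
        ‖p.1‖ ^ 2 + ‖p.2‖ ^ 2 = ‖x₀‖ ^ 2 ∧
        T (Complex.I • x₀) = p.1 • T x₀ + p.2) ∧
      (⟪T (Complex.I • x₀), T x₀⟫).re = 0 := by
  -- T preserves real parts of inner products
  have key : ∀ x y : H, (⟪T x, T y⟫).re = (⟪x, y⟫).re := by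
    intro x y
    have h1 := norm_add_sq (𝕜 := ℂ) (T x) (T y)
    have h2 := norm_add_sq (𝕜 := ℂ) x y
    rw [← hadd, hiso, hiso, hiso] at h1
    simp only [RCLike.re_to_complex] at h1 h2
    linarith
  set v := T x₀ with hv
  set u := T (Complex.I • x₀) with hu
  have hnv : ‖v‖ = 1 := by rw [hv, hiso, hx₀]
  have hnu : ‖u‖ = 1 := by
    rw [hu, hiso, norm_smul, Complex.norm_I, one_mul, hx₀]
  set α : ℂ := ⟪v, u⟫ with hα
  set η : K := u - α • v with hη
  have hvv : ⟪v, v⟫ = 1 := by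
    rw [@inner_self_eq_norm_sq_to_K ℂ, hnv]; norm_num
  have hηv : ⟪η, v⟫ = 0 := by
    rw [hη, inner_sub_left, inner_smul_left, hvv, mul_one, hα, inner_conj_symm, sub_self]
  have hrea : α.re = 0 := by
    rw [hα, key, inner_smul_right]
    have : (⟪x₀, x₀⟫).im = 0 := by
      have h0 := inner_self_im (𝕜 := ℂ) x₀
      rwa [RCLike.im_to_complex] at h0
    simp [Complex.mul_re, this, pow_two, Complex.mul_im]
  have hdecomp : u = α • v + η := by rw [hη]; abel
  have hnorm : ‖α‖ ^ 2 + ‖η‖ ^ 2 = ‖x₀‖ ^ 2 := by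
    have horth : ⟪α • v, η⟫ = 0 := by
      rw [inner_smul_left, ← inner_conj_symm v η, hηv, map_zero, mul_zero]
    have := norm_add_sq (𝕜 := ℂ) (α • v) η
    rw [horth] at this
    simp only [map_zero, mul_zero, add_zero] at this
    rw [← hdecomp, hnu] at this
    rw [norm_smul, hnv, mul_one] at this
    rw [hx₀]
    norm_num at this ⊢
    linarith
  constructor
  · refine ⟨(α, η), ⟨hrea, hηv, hnorm, hdecomp⟩, ?_⟩
    rintro ⟨β, w⟩ ⟨-, hw, -, hdec⟩
    dsimp only at hw hdec ⊢
    have hβ : β = α := by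
      have h : ⟪v, u⟫ = β := by
        rw [hdec, inner_add_right, inner_smul_right, hvv, mul_one,
          ← inner_conj_symm v w, hw, map_zero, add_zero]
      rw [← h, hα]
    have hwη : w = η := by
      rw [hη, hdec, hβ]; abel
    rw [hβ, hwη]
  · have h := hrea
    rw [hα] at h
    show (⟪u, v⟫).re = 0
    rw [← inner_conj_symm u v, Complex.conj_re]
    exact h
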